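/- Let F : R → ℝⁿ be continuous on a rectangle R = Πᵢ [aᵢ, bᵢ], with Fᵢ(x) < 0 whenever xᵢ = aᵢ and Fᵢ(x) > 0 whenever xᵢ = bᵢ. Then there exists x₀ in the interior of R with F(x₀) = 0. Moreover, if F = ∇E for a C² function E whose Hessian is positive definite throughout R, then x₀ is a local minimum of E and it is the unique zero of F in R. -/

import Mathlib

open Finset Equiv
open scoped Classical

lemma card_modEq_card_fixed {α : Type*} [DecidableEq α] (s : Finset α) (f : α → α)
    (hmem : ∀ a ∈ s, f a ∈ s) (hinv : ∀ a ∈ s, f (f a) = a) :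
    s.card ≡ (s.filter fun a => f a = a).card [MOD 2] := by
  classical
  induction s using Finset.strongInduction with
  | _ s ih =>
    by_cases hfix : ∀ a ∈ s, f a = a
    · rw [Finset.filter_true_of_mem hfix]
    push_neg at hfix
    obtain ⟨a, ha, hfa⟩ := hfix
    set s' := s \ {a, f a} with hs'
    have hsub : s' ⊂ s := by
      refine Finset.ssubset_iff_of_subset (Finset.sdiff_subset) |>.mpr ⟨a, ha, by simp [hs']⟩
    have hmem' : ∀ b ∈ s', f b ∈ s' := by
      intro b hb
      simp only [hs', Finset.mem_sdiff, Finset.mem_insert, Finset.mem_singleton] at hb ⊢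
      obtain ⟨hbs, hb2⟩ := hb
      push_neg at hb2
      refine ⟨hmem b hbs, ?_⟩
      rintro (h | h)
      · exact hb2.2 (by rw [← hinv b hbs, h])
      · have : f (f b) = f (f a) := by rw [h]
        rw [hinv b hbs, hinv a ha] at this
        exact hb2.1 this
    have hinv' : ∀ b ∈ s', f (f b) = b := fun b hb => hinv b (Finset.mem_sdiff.mp hb).1
    have hcard : s.card = s'.card + 2 := by
      have hfa_mem : f a ∈ s := hmem a ha
      have hsubs : ({a, f a} : Finset α) ⊆ s := by
        intro x hx; simp at hx; rcases hx with rfl | rfl <;> assumption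
      have h1 : s'.card = s.card - 2 := by
        rw [hs', Finset.card_sdiff_of_subset hsubs, Finset.card_insert_of_notMem (by simp [Ne.symm hfa]),
          Finset.card_singleton]
      have h2 : 2 ≤ s.card := by
        calc 2 = ({a, f a} : Finset α).card := by
                rw [Finset.card_insert_of_notMem (by simp [Ne.symm hfa]), Finset.card_singleton]
          _ ≤ s.card := Finset.card_le_card hsubs
      omega
    have hfilter : s.filter (fun a => f a = a) = s'.filter (fun a => f a = a) := by
      ext b
      simp only [Finset.mem_filter, hs', Finset.mem_sdiff, Finset.mem_insert,
        Finset.mem_singleton]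
      constructor
      · rintro ⟨hb, hfb⟩
        refine ⟨⟨hb, ?_⟩, hfb⟩
        push_neg
        constructor
        · rintro rfl; exact hfa hfb
        · rintro rfl; rw [hinv a ha] at hfb; exact hfa hfb.symm
      · rintro ⟨⟨hb, _⟩, hfb⟩; exact ⟨hb, hfb⟩
    rw [hcard, hfilter]
    have := ih s' hsub hmem' hinv'
    unfold Nat.ModEq at this ⊢
    omega

variable {n : ℕ}

def DoorF (f : Fin (n+1) → Fin (n+1)) (k : Fin (n+1)) : Prop :=
  (univ.erase k).image f = univ.erase (Fin.last n)

lemma doorF_injOn {f : Fin (n+1) → Fin (n+1)} {k : Fin (n+1)} (h : DoorF f k) :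
    Set.InjOn f (univ.erase k) := by
  apply Finset.injOn_of_card_image_eq
  rw [h, Finset.card_erase_of_mem (mem_univ _), Finset.card_erase_of_mem (mem_univ _)]

lemma doorF_of_inj {f : Fin (n+1) → Fin (n+1)} (hf : Function.Injective f) (k : Fin (n+1)) :
    (univ.erase k).image f = univ.erase (f k) := by
  apply Finset.eq_of_subset_of_card_le
  · intro y hy
    simp only [Finset.mem_image, Finset.mem_erase, Finset.mem_univ, and_true] at hy ⊢
    obtain ⟨j, hj, rfl⟩ := hy
    exact fun hc => hj (hf hc)
  · rw [Finset.card_erase_of_mem (mem_univ _),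
      Finset.card_image_of_injective _ hf, Finset.card_erase_of_mem (mem_univ _)]

lemma doorF_swap {f : Fin (n+1) → Fin (n+1)} {k j : Fin (n+1)}
    (hdk : DoorF f k) (hfj : f j = f k) (hjk : j ≠ k) : DoorF f j := by
  unfold DoorF at hdk ⊢
  ext y
  constructor
  · intro hy
    obtain ⟨t, ht, rfl⟩ := Finset.mem_image.mp hy
    rcases eq_or_ne t k with rfl | htk
    · rw [← hdk]
      exact Finset.mem_image.mpr ⟨j, by simp [hjk], hfj⟩
    · rw [← hdk]
      exact Finset.mem_image.mpr ⟨t, by simp [htk], rfl⟩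
  · intro hy
    rw [← hdk] at hy
    obtain ⟨t, ht, rfl⟩ := Finset.mem_image.mp hy
    have htk : t ≠ k := (Finset.mem_erase.mp ht).1
    rcases eq_or_ne t j with rfl | htj
    · exact Finset.mem_image.mpr ⟨k, by simp [Ne.symm hjk], hfj.symm⟩
    · exact Finset.mem_image.mpr ⟨t, by simp [htj], rfl⟩

lemma doorF_count (f : Fin (n+1) → Fin (n+1)) {inst : Decidable (Function.Surjective f)} :
    (univ.filter fun k => DoorF f k).card
      ≡ (@ite ℕ (Function.Surjective f) inst 1 0) [MOD 2] := by
  split_ifs with hsurj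
  · have hinj : Function.Injective f := by
      have := Finite.injective_iff_surjective (f := f)
      tauto
    have heq : (univ.filter fun k => DoorF f k) = {Fintype.bijInv ⟨hinj, hsurj⟩ (Fin.last n)} := by
      ext k
      simp only [Finset.mem_filter, Finset.mem_univ, true_and, Finset.mem_singleton]
      unfold DoorF
      rw [doorF_of_inj hinj, Finset.erase_inj _ (mem_univ _)]
      constructor
      · intro h
        apply hinj
        rw [h, Fintype.rightInverse_bijInv ⟨hinj, hsurj⟩]
      · rintro rfl
        rw [Fintype.rightInverse_bijInv ⟨hinj, hsurj⟩]
    rw [heq, Finset.card_singleton]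
  · rcases eq_or_ne (univ.filter fun k => DoorF f k) ∅ with he | he
    · rw [he]; rfl
    obtain ⟨k, hk⟩ := Finset.nonempty_iff_ne_empty.mpr he
    have hdk : DoorF f k := (Finset.mem_filter.mp hk).2
    have hfk : f k ≠ Fin.last n := by
      intro hc
      apply hsurj
      intro y
      rcases eq_or_ne y (Fin.last n) with rfl | hy
      · exact ⟨k, hc⟩
      · have : y ∈ (univ.erase k).image f := by rw [hdk]; simp [hy]
        obtain ⟨j, _, hj⟩ := Finset.mem_image.mp this
        exact ⟨j, hj⟩
    have hfk' : f k ∈ (univ.erase k).image f := by rw [hdk]; simp [hfk]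
    obtain ⟨j, hj, hfj⟩ := Finset.mem_image.mp hfk'
    have hjk : j ≠ k := (Finset.mem_erase.mp hj).1
    have key : (univ.filter fun k => DoorF f k) = {k, j} := by
      ext k'
      simp only [Finset.mem_filter, Finset.mem_univ, true_and, Finset.mem_insert,
        Finset.mem_singleton]
      constructor
      · intro hd
        by_contra hc
        push_neg at hc
        have hinj := doorF_injOn hd
        have : j = k := hinj (by simp [Ne.symm hc.2]) (by simp [Ne.symm hc.1]) hfj
        exact hjk this
      · rintro (rfl | rfl)
        · exact hdk
        · exact doorF_swap hdk hfj hjk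
    rw [key, Finset.card_insert_of_notMem (by simp [Ne.symm hjk]), Finset.card_singleton]
    rfl

variable {N : ℕ}

def vtx {n : ℕ} (c : Fin n → ℕ) (π : Equiv.Perm (Fin n)) (k : Fin (n+1)) : Fin n → ℕ :=
  fun i => c i + if ((π.symm i : ℕ) < (k : ℕ)) then 1 else 0

lemma finRotate_symm_val (u : Fin (N+1)) :
    (((finRotate (N+1)).symm u : Fin (N+1)) : ℕ) = if u = 0 then N else (u : ℕ) - 1 := by
  split_ifs with h
  · subst h
    rw [show (0 : Fin (N+1)) = finRotate (N+1) (Fin.last N) from (finRotate_last).symm,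
      Equiv.symm_apply_apply]
    rfl
  · have hru : finRotate (N+1) ((finRotate (N+1)).symm u) = u := Equiv.apply_symm_apply _ _
    rw [finRotate_succ_apply] at hru
    have hvl : (finRotate (N+1)).symm u ≠ Fin.last N := by
      intro hc
      rw [hc, Fin.last_add_one] at hru
      exact h hru.symm
    have := Fin.val_add_one ((finRotate (N+1)).symm u)
    rw [if_neg hvl, hru] at this
    omega

def upC (c : Fin (N+1) → ℕ) (π : Equiv.Perm (Fin (N+1))) : Fin (N+1) → ℕ :=
  Function.update c (π 0) (c (π 0) + 1)

def upP (π : Equiv.Perm (Fin (N+1))) : Equiv.Perm (Fin (N+1)) := π * finRotate (N+1)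

def downC (c : Fin (N+1) → ℕ) (π : Equiv.Perm (Fin (N+1))) : Fin (N+1) → ℕ :=
  Function.update c (π (Fin.last N)) (c (π (Fin.last N)) - 1)

def downP (π : Equiv.Perm (Fin (N+1))) : Equiv.Perm (Fin (N+1)) := π * (finRotate (N+1))⁻¹

lemma upP_last (π : Equiv.Perm (Fin (N+1))) : upP π (Fin.last N) = π 0 := by
  simp [upP, Equiv.Perm.mul_apply, finRotate_last]

lemma downP_zero (π : Equiv.Perm (Fin (N+1))) : downP π 0 = π (Fin.last N) := by
  have : (finRotate (N+1))⁻¹ (0 : Fin (N+1)) = Fin.last N := by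
    rw [← finRotate_last, Equiv.Perm.inv_def, Equiv.symm_apply_apply]
  simp [downP, Equiv.Perm.mul_apply, this]

lemma down_up (c : Fin (N+1) → ℕ) (π : Equiv.Perm (Fin (N+1))) :
    downC (upC c π) (upP π) = c ∧ downP (upP π) = π := by
  constructor
  · funext i
    rw [downC, upP_last]
    rcases eq_or_ne i (π 0) with rfl | hi
    · simp [upC]
    · simp [Function.update_apply, upC, hi]
  · simp [downP, upP, mul_assoc]

lemma up_down (c : Fin (N+1) → ℕ) (π : Equiv.Perm (Fin (N+1))) (hpos : 0 < c (π (Fin.last N))) :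
    upC (downC c π) (downP π) = c ∧ upP (downP π) = π := by
  constructor
  · funext i
    rw [upC, downP_zero]
    rcases eq_or_ne i (π (Fin.last N)) with rfl | hi
    · simp only [Function.update_self, downC]
      omega
    · simp [Function.update_apply, downC, hi]
  · simp [downP, upP, mul_assoc]

lemma vtx_mid (c : Fin (N+1) → ℕ) (π : Equiv.Perm (Fin (N+1))) {k : Fin (N+2)}
    (h0 : k ≠ 0) (hl : k ≠ Fin.last (N+1)) {j : Fin (N+2)} (hj : j ≠ k) :
    vtx c (π * Equiv.swap (k.pred h0) (k.castPred hl)) j = vtx c π j := by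
  funext i
  unfold vtx
  congr 1
  have hsymm : (π * Equiv.swap (k.pred h0) (k.castPred hl)).symm i
      = Equiv.swap (k.pred h0) (k.castPred hl) (π.symm i) := by
    rw [Equiv.Perm.mul_def, Equiv.symm_trans_apply, Equiv.symm_swap]
  rw [hsymm]
  have hk0 : (k : ℕ) ≠ 0 := fun h => h0 (Fin.ext h)
  have hjk : (j : ℕ) ≠ (k : ℕ) := fun h => hj (Fin.ext h)
  have hpred : ((k.pred h0 : Fin (N+1)) : ℕ) = (k : ℕ) - 1 := rfl
  have hcast : ((k.castPred hl : Fin (N+1)) : ℕ) = (k : ℕ) := rfl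
  rcases eq_or_ne (π.symm i) (k.pred h0) with h1 | h1
  · rw [h1, Equiv.swap_apply_left, hcast, hpred]
    split_ifs with hA hB hB <;> first | rfl | omega
  rcases eq_or_ne (π.symm i) (k.castPred hl) with h2 | h2
  · rw [h2, Equiv.swap_apply_right, hpred, hcast]
    split_ifs with hA hB hB <;> first | rfl | omega
  · rw [Equiv.swap_apply_of_ne_of_ne h1 h2]

lemma vtx_up (c : Fin (N+1) → ℕ) (π : Equiv.Perm (Fin (N+1))) (j : Fin (N+1)) :
    vtx (upC c π) (upP π) j.castSucc = vtx c π j.succ := by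
  funext i
  have hj := j.isLt
  unfold vtx
  have hsymm : (((upP π).symm i : Fin (N+1)) : ℕ)
      = if π.symm i = 0 then N else ((π.symm i : Fin (N+1)) : ℕ) - 1 := by
    rw [upP, Equiv.Perm.mul_def, Equiv.symm_trans_apply]
    exact finRotate_symm_val (π.symm i)
  rcases eq_or_ne (π.symm i) 0 with h | h
  · rw [if_pos h] at hsymm
    have hi : i = π 0 := by rw [← h, Equiv.apply_symm_apply]
    rw [hsymm, hi, upC, Function.update_self, Equiv.symm_apply_apply]
    simp only [Fin.val_zero, Fin.coe_castSucc, Fin.val_succ]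
    rw [if_neg (by omega : ¬ N < (j:ℕ))]; simp
  · rw [if_neg h] at hsymm
    have hi : i ≠ π 0 := fun hc => h (by rw [hc, Equiv.symm_apply_apply])
    rw [upC, Function.update_apply, if_neg hi, hsymm]
    have h0 : ((π.symm i : Fin (N+1)) : ℕ) ≠ 0 := fun hc => h (Fin.ext hc)
    simp only [Fin.coe_castSucc, Fin.val_succ]
    by_cases hc : ((π.symm i : Fin (N+1)) : ℕ) - 1 < (j:ℕ)
    · rw [if_pos hc, if_pos (by omega)]
    · rw [if_neg hc, if_neg (by omega)]

-- ==== doors / simplices / boundary conditions ====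

def Door {n : ℕ} (ℓ : (Fin n → ℕ) → Fin (n+1)) (c : Fin n → ℕ) (π : Equiv.Perm (Fin n))
    (k : Fin (n+1)) : Prop :=
  DoorF (fun j => ℓ (vtx c π j)) k

def Full {n : ℕ} (ℓ : (Fin n → ℕ) → Fin (n+1)) (c : Fin n → ℕ) (π : Equiv.Perm (Fin n)) :
    Prop :=
  Function.Surjective (fun k => ℓ (vtx c π k))

def cells (n m : ℕ) : Finset (Fin n → ℕ) := Fintype.piFinset fun _ => Finset.range m

lemma mem_cells {n m : ℕ} {c : Fin n → ℕ} : c ∈ cells n m ↔ ∀ i, c i < m := by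
  simp [cells]

def simps (n m : ℕ) : Finset ((Fin n → ℕ) × Equiv.Perm (Fin n)) := (cells n m) ×ˢ univ

def BC (n m : ℕ) (ℓ : (Fin n → ℕ) → Fin (n+1)) : Prop :=
  ∀ p : Fin n → ℕ, (∀ i, p i ≤ m) →
    (∀ i, p i = 0 → ℓ p ≠ i.castSucc) ∧ (∀ i, p i = m → ℓ p ≤ i.castSucc)

lemma vtx_le {n m : ℕ} {c : Fin n → ℕ} (hc : ∀ i, c i < m) (π : Equiv.Perm (Fin n))
    (k : Fin (n+1)) : ∀ i, vtx c π k i ≤ m := by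
  intro i
  unfold vtx
  have := hc i
  split_ifs <;> omega

lemma image_erase_zero' {β : Type*} [DecidableEq β] {M : ℕ} (g : Fin (M+1) → β) :
    (univ.erase 0).image g = univ.image (fun i : Fin M => g i.succ) := by
  rw [← Finset.compl_singleton, ← Fin.image_succ_univ, Finset.image_image]
  rfl

lemma image_erase_last' {β : Type*} [DecidableEq β] {M : ℕ} (g : Fin (M+1) → β) :
    (univ.erase (Fin.last M)).image g = univ.image (fun i : Fin M => g i.castSucc) := by
  rw [← Finset.compl_singleton, ← Fin.image_castSucc, Finset.image_image]
  rfl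

lemma door_up {N : ℕ} (ℓ : (Fin (N+1) → ℕ) → Fin (N+2)) (c : Fin (N+1) → ℕ)
    (π : Equiv.Perm (Fin (N+1))) :
    Door ℓ (upC c π) (upP π) (Fin.last (N+1)) ↔ Door ℓ c π 0 := by
  unfold Door DoorF
  rw [image_erase_last', image_erase_zero']
  have : (fun i : Fin (N+1) => ℓ (vtx (upC c π) (upP π) i.castSucc))
      = fun i : Fin (N+1) => ℓ (vtx c π i.succ) := funext fun i => by rw [vtx_up]
  rw [this]

lemma door_mid {N : ℕ} (ℓ : (Fin (N+1) → ℕ) → Fin (N+2)) (c : Fin (N+1) → ℕ)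
    (π : Equiv.Perm (Fin (N+1))) {k : Fin (N+2)} (h0 : k ≠ 0) (hl : k ≠ Fin.last (N+1)) :
    Door ℓ c (π * Equiv.swap (k.pred h0) (k.castPred hl)) k ↔ Door ℓ c π k := by
  unfold Door DoorF
  have : ∀ j ∈ univ.erase k,
      ℓ (vtx c (π * Equiv.swap (k.pred h0) (k.castPred hl)) j) = ℓ (vtx c π j) := by
    intro j hj
    rw [vtx_mid c π h0 hl (Finset.mem_erase.mp hj).1]
  rw [Finset.image_congr this]

noncomputable def psi {N : ℕ} (m : ℕ)
    (t : ((Fin (N+1) → ℕ) × Equiv.Perm (Fin (N+1))) × Fin (N+2)) :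
    ((Fin (N+1) → ℕ) × Equiv.Perm (Fin (N+1))) × Fin (N+2) :=
  if h0 : t.2 = 0 then
    (if t.1.1 (t.1.2 0) + 2 ≤ m then ((upC t.1.1 t.1.2, upP t.1.2), Fin.last (N+1)) else t)
  else if hl : t.2 = Fin.last (N+1) then
    (if 0 < t.1.1 (t.1.2 (Fin.last N)) then ((downC t.1.1 t.1.2, downP t.1.2), 0) else t)
  else ((t.1.1, t.1.2 * Equiv.swap (t.2.pred h0) (t.2.castPred hl)), t.2)

noncomputable def TT (N m : ℕ) (ℓ : (Fin (N+1) → ℕ) → Fin (N+2)) :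
    Finset (((Fin (N+1) → ℕ) × Equiv.Perm (Fin (N+1))) × Fin (N+2)) :=
  ((simps (N+1) m) ×ˢ univ).filter fun t => Door ℓ t.1.1 t.1.2 t.2

lemma mem_TT {N m : ℕ} {ℓ : (Fin (N+1) → ℕ) → Fin (N+2)}
    {t : ((Fin (N+1) → ℕ) × Equiv.Perm (Fin (N+1))) × Fin (N+2)} :
    t ∈ TT N m ℓ ↔ (∀ i, t.1.1 i < m) ∧ Door ℓ t.1.1 t.1.2 t.2 := by
  simp [TT, simps, Finset.mem_filter, Finset.mem_product, mem_cells]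

lemma last_ne_zero' {N : ℕ} : (Fin.last (N+1)) ≠ (0 : Fin (N+2)) := by
  simp [Fin.ext_iff]

section psiComp
variable {N m : ℕ} (c : Fin (N+1) → ℕ) (π : Equiv.Perm (Fin (N+1)))

lemma psi_at_zero_pos (hcond : c (π 0) + 2 ≤ m) :
    psi (N := N) m ((c, π), 0) = ((upC c π, upP π), Fin.last (N+1)) := by
  unfold psi
  rw [dif_pos rfl, if_pos hcond]

lemma psi_at_zero_neg (hcond : ¬ (c (π 0) + 2 ≤ m)) :
    psi (N := N) m ((c, π), 0) = ((c, π), 0) := by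
  unfold psi
  rw [dif_pos rfl, if_neg hcond]

lemma psi_at_last_pos (hcond : 0 < c (π (Fin.last N))) :
    psi (N := N) m ((c, π), Fin.last (N+1)) = ((downC c π, downP π), 0) := by
  unfold psi
  rw [dif_neg last_ne_zero', dif_pos rfl, if_pos hcond]

lemma psi_at_last_neg (hcond : ¬ 0 < c (π (Fin.last N))) :
    psi (N := N) m ((c, π), Fin.last (N+1)) = ((c, π), Fin.last (N+1)) := by
  unfold psi
  rw [dif_neg last_ne_zero', dif_pos rfl, if_neg hcond]

lemma psi_at_mid {k : Fin (N+2)} (h0 : k ≠ 0) (hl : k ≠ Fin.last (N+1)) :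
    psi (N := N) m ((c, π), k) = ((c, π * Equiv.swap (k.pred h0) (k.castPred hl)), k) := by
  unfold psi
  rw [dif_neg h0, dif_neg hl]

end psiComp

lemma psi_mem {N m : ℕ} {ℓ : (Fin (N+1) → ℕ) → Fin (N+2)}
    {t : ((Fin (N+1) → ℕ) × Equiv.Perm (Fin (N+1))) × Fin (N+2)}
    (ht : t ∈ TT N m ℓ) : psi m t ∈ TT N m ℓ := by
  obtain ⟨⟨c, π⟩, k⟩ := t
  rw [mem_TT] at ht
  obtain ⟨hc, hd⟩ := ht
  simp only at hc hd
  by_cases h0 : k = 0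
  · subst h0
    by_cases hcond : c (π 0) + 2 ≤ m
    · rw [psi_at_zero_pos c π hcond, mem_TT]
      refine ⟨?_, (door_up ℓ c π).mpr hd⟩
      intro i
      dsimp only
      by_cases hi : i = π 0
      · subst hi; rw [upC, Function.update_self]; omega
      · rw [upC, Function.update_apply, if_neg hi]; exact hc i
    · rw [psi_at_zero_neg c π hcond, mem_TT]; exact ⟨hc, hd⟩
  · by_cases hl : k = Fin.last (N+1)
    · subst hl
      by_cases hcond : 0 < c (π (Fin.last N))
      · rw [psi_at_last_pos c π hcond, mem_TT]
        have hup := up_down c π hcond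
        refine ⟨?_, ?_⟩
        · intro i
          dsimp only
          by_cases hi : i = π (Fin.last N)
          · subst hi; rw [downC, Function.update_self]
            have := hc (π (Fin.last N)); omega
          · rw [downC, Function.update_apply, if_neg hi]; exact hc i
        · have := (door_up ℓ (downC c π) (downP π))
          rw [hup.1, hup.2] at this
          exact this.mp hd
      · rw [psi_at_last_neg c π hcond, mem_TT]; exact ⟨hc, hd⟩
    · rw [psi_at_mid c π h0 hl, mem_TT]
      exact ⟨hc, (door_mid ℓ c π h0 hl).mpr hd⟩

lemma psi_invol {N m : ℕ} {ℓ : (Fin (N+1) → ℕ) → Fin (N+2)}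
    {t : ((Fin (N+1) → ℕ) × Equiv.Perm (Fin (N+1))) × Fin (N+2)}
    (ht : t ∈ TT N m ℓ) : psi m (psi m t) = t := by
  obtain ⟨⟨c, π⟩, k⟩ := t
  rw [mem_TT] at ht
  obtain ⟨hc, _⟩ := ht
  simp only at hc
  by_cases h0 : k = 0
  · subst h0
    by_cases hcond : c (π 0) + 2 ≤ m
    · rw [psi_at_zero_pos c π hcond]
      have hpos : 0 < upC c π (upP π (Fin.last N)) := by
        rw [upP_last, upC, Function.update_self]; omega
      rw [psi_at_last_pos _ _ hpos]
      have hdu := down_up c π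
      rw [hdu.1, hdu.2]
    · rw [psi_at_zero_neg c π hcond, psi_at_zero_neg c π hcond]
  · by_cases hl : k = Fin.last (N+1)
    · subst hl
      by_cases hcond : 0 < c (π (Fin.last N))
      · rw [psi_at_last_pos c π hcond]
        have hc2 : downC c π (downP π 0) + 2 ≤ m := by
          rw [downP_zero, downC, Function.update_self]
          have := hc (π (Fin.last N)); omega
        rw [psi_at_zero_pos _ _ hc2]
        have hud := up_down c π hcond
        rw [hud.1, hud.2]
      · rw [psi_at_last_neg c π hcond, psi_at_last_neg c π hcond]
    · rw [psi_at_mid c π h0 hl,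
        psi_at_mid c (π * Equiv.swap (k.pred h0) (k.castPred hl)) h0 hl,
        mul_assoc, Equiv.swap_mul_self, mul_one]

-- ==== fixed point analysis ====

lemma le_N_of_ne_last {N : ℕ} {j : Fin (N+2)} (hj : j ≠ Fin.last (N+1)) : (j : ℕ) ≤ N := by
  have h1 := j.isLt
  have h2 : (j : ℕ) ≠ N+1 := fun hc => hj (Fin.ext hc)
  omega

lemma fixed_not_last {N m : ℕ} {ℓ : (Fin (N+1) → ℕ) → Fin (N+2)} (hBC : BC (N+1) m ℓ)
    {c : Fin (N+1) → ℕ} {π : Equiv.Perm (Fin (N+1))}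
    (hc : ∀ i, c i < m) (hd : Door ℓ c π (Fin.last (N+1))) :
    0 < c (π (Fin.last N)) := by
  by_contra hpos
  have hc0 : c (π (Fin.last N)) = 0 := by omega
  have hmem : (π (Fin.last N)).castSucc ∈ univ.erase (Fin.last (N+1)) := by
    simp [Fin.ext_iff]
    have := (π (Fin.last N)).isLt
    omega
  rw [← hd] at hmem
  obtain ⟨j, hj, hℓ⟩ := Finset.mem_image.mp hmem
  have hjne : j ≠ Fin.last (N+1) := (Finset.mem_erase.mp hj).1
  have hp0 : vtx c π j (π (Fin.last N)) = 0 := by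
    unfold vtx
    rw [Equiv.symm_apply_apply, hc0]
    rw [if_neg]
    have := le_N_of_ne_last hjne
    simp
    omega
  exact ((hBC (vtx c π j) (vtx_le hc π j)).1 (π (Fin.last N)) hp0) hℓ

lemma fixed_zero_pi {N m : ℕ} {ℓ : (Fin (N+1) → ℕ) → Fin (N+2)} (hBC : BC (N+1) m ℓ)
    {c : Fin (N+1) → ℕ} {π : Equiv.Perm (Fin (N+1))}
    (hc : ∀ i, c i < m) (hd : Door ℓ c π 0) (hcond : ¬ (c (π 0) + 2 ≤ m)) :
    π 0 = Fin.last N := by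
  have hm : c (π 0) + 1 = m := by have := hc (π 0); omega
  have hmem : (Fin.last N).castSucc ∈ univ.erase (Fin.last (N+1)) := by
    simp [Fin.ext_iff]
  rw [← hd] at hmem
  obtain ⟨j, hj, hℓ⟩ := Finset.mem_image.mp hmem
  have hjne : j ≠ 0 := (Finset.mem_erase.mp hj).1
  have hpm : vtx c π j (π 0) = m := by
    unfold vtx
    rw [Equiv.symm_apply_apply, if_pos]
    · omega
    · have : (j:ℕ) ≠ 0 := fun hc => hjne (Fin.ext hc)
      simp only [Fin.val_zero]
      omega
  have hle := (hBC (vtx c π j) (vtx_le hc π j)).2 (π 0) hpm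
  rw [hℓ] at hle
  have := Fin.castSucc_le_castSucc_iff.mp hle
  exact le_antisymm (Fin.le_last _) this

-- ==== dimension reduction ====

def extPerm {N : ℕ} (π' : Equiv.Perm (Fin N)) : Equiv.Perm (Fin (N+1)) where
  toFun := Fin.cons (Fin.last N) (fun j => (π' j).castSucc)
  invFun := Fin.lastCases 0 (fun i => (π'.symm i).succ)
  left_inv := by
    intro x
    cases x using Fin.cases with
    | zero => simp
    | succ j => simp
  right_inv := by
    intro x
    cases x using Fin.lastCases with
    | last => simp
    | cast i => simp

@[simp] lemma extPerm_zero {N : ℕ} (π' : Equiv.Perm (Fin N)) :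
    extPerm π' 0 = Fin.last N := rfl

@[simp] lemma extPerm_succ {N : ℕ} (π' : Equiv.Perm (Fin N)) (j : Fin N) :
    extPerm π' j.succ = (π' j).castSucc := by
  show (Fin.cons (Fin.last N) (fun j => (π' j).castSucc) : Fin (N+1) → Fin (N+1)) j.succ = _
  rw [Fin.cons_succ]

@[simp] lemma extPerm_symm_last {N : ℕ} (π' : Equiv.Perm (Fin N)) :
    (extPerm π').symm (Fin.last N) = 0 := by
  show Fin.lastCases (motive := fun _ => Fin (N+1)) 0 (fun i => (π'.symm i).succ) (Fin.last N) = 0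
  simp

@[simp] lemma extPerm_symm_castSucc {N : ℕ} (π' : Equiv.Perm (Fin N)) (i : Fin N) :
    (extPerm π').symm i.castSucc = (π'.symm i).succ := by
  show Fin.lastCases (motive := fun _ => Fin (N+1)) 0 (fun i => (π'.symm i).succ) i.castSucc
      = (π'.symm i).succ
  simp

def restr {N : ℕ} (π : Equiv.Perm (Fin (N+1))) (hπ : π 0 = Fin.last N) :
    Equiv.Perm (Fin N) where
  toFun j := (π j.succ).castPred
    (by intro hc; exact (Fin.succ_ne_zero j) (π.injective (hc.trans hπ.symm)))
  invFun i := (π.symm i.castSucc).pred (fun hc => by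
    have h1 : i.castSucc = π 0 := by rw [← hc, Equiv.apply_symm_apply]
    rw [hπ] at h1
    exact (Fin.castSucc_lt_last i).ne h1)
  left_inv j := by
    apply Fin.succ_injective
    rw [Fin.succ_pred, Fin.castSucc_castPred, Equiv.symm_apply_apply]
  right_inv i := by
    apply Fin.castSucc_injective
    rw [Fin.castSucc_castPred, Fin.succ_pred, Equiv.apply_symm_apply]

lemma extPerm_restr {N : ℕ} (π : Equiv.Perm (Fin (N+1))) (hπ : π 0 = Fin.last N) :
    extPerm (restr π hπ) = π := by
  apply Equiv.ext
  intro x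
  cases x using Fin.cases with
  | zero => rw [extPerm_zero, hπ]
  | succ j =>
    have hr : (restr π hπ) j = (π j.succ).castPred
        (by intro hc; exact (Fin.succ_ne_zero j) (π.injective (hc.trans hπ.symm))) := rfl
    rw [extPerm_succ, hr, Fin.castSucc_castPred]

lemma extPerm_inj {N : ℕ} : Function.Injective (extPerm (N := N)) := by
  intro a b hab
  apply Equiv.ext
  intro j
  have := congrArg (fun σ : Equiv.Perm (Fin (N+1)) => σ j.succ) hab
  simp only [extPerm_succ] at this
  exact Fin.castSucc_injective _ this

noncomputable def resL {N : ℕ} (ℓ : (Fin (N+1) → ℕ) → Fin (N+2)) (m : ℕ) :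
    (Fin N → ℕ) → Fin (N+1) :=
  fun p => if h : ℓ (Fin.snoc p m) = Fin.last (N+1) then 0 else (ℓ (Fin.snoc p m)).castPred h

lemma snoc_le {N m : ℕ} {p : Fin N → ℕ} (hp : ∀ i, p i ≤ m) :
    ∀ i, (Fin.snoc p m : Fin (N+1) → ℕ) i ≤ m := by
  intro i
  cases i using Fin.lastCases with
  | last => rw [Fin.snoc_last]
  | cast i => rw [Fin.snoc_castSucc]; exact hp i

lemma resL_eq {N m : ℕ} {ℓ : (Fin (N+1) → ℕ) → Fin (N+2)} (hBC : BC (N+1) m ℓ)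
    {p : Fin N → ℕ} (hp : ∀ i, p i ≤ m) :
    (resL ℓ m p).castSucc = ℓ (Fin.snoc p m) := by
  have hle := (hBC (Fin.snoc p m) (snoc_le hp)).2 (Fin.last N) (Fin.snoc_last _ _)
  have hne : ℓ (Fin.snoc p m) ≠ Fin.last (N+1) :=
    (lt_of_le_of_lt hle (Fin.castSucc_lt_last _)).ne
  rw [resL, dif_neg hne, Fin.castSucc_castPred]

lemma BC_resL {N m : ℕ} {ℓ : (Fin (N+1) → ℕ) → Fin (N+2)} (hBC : BC (N+1) m ℓ) :
    BC N m (resL ℓ m) := by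
  intro p hp
  have heq := resL_eq hBC hp
  constructor
  · intro i hi hc
    have h0 : (Fin.snoc p m : Fin (N+1) → ℕ) i.castSucc = 0 := by rw [Fin.snoc_castSucc]; exact hi
    apply (hBC (Fin.snoc p m) (snoc_le hp)).1 i.castSucc h0
    rw [← heq, hc]
  · intro i hi
    have h0 : (Fin.snoc p m : Fin (N+1) → ℕ) i.castSucc = m := by rw [Fin.snoc_castSucc]; exact hi
    have := (hBC (Fin.snoc p m) (snoc_le hp)).2 i.castSucc h0
    rw [← heq] at this
    exact Fin.castSucc_le_castSucc_iff.mp this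

lemma vtx_ext {N m : ℕ} (hm : 0 < m) (c' : Fin N → ℕ) (π' : Equiv.Perm (Fin N))
    (j : Fin (N+1)) :
    vtx (Fin.snoc c' (m-1)) (extPerm π') j.succ = Fin.snoc (vtx c' π' j) m := by
  funext i
  cases i using Fin.lastCases with
  | last =>
    rw [Fin.snoc_last]
    unfold vtx
    rw [Fin.snoc_last, extPerm_symm_last]
    rw [if_pos (by simp [Fin.pos_iff_ne_zero, Fin.succ_ne_zero] )]
    omega
  | cast i =>
    rw [Fin.snoc_castSucc]
    unfold vtx
    rw [Fin.snoc_castSucc, extPerm_symm_castSucc]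
    congr 1
    simp only [Fin.val_succ]
    by_cases hc : ((π'.symm i : Fin N) : ℕ) < (j : ℕ)
    · rw [if_pos (by omega), if_pos hc]
    · rw [if_neg (by omega), if_neg hc]

lemma full_ext_iff {N m : ℕ} (hm : 0 < m) {ℓ : (Fin (N+1) → ℕ) → Fin (N+2)}
    (hBC : BC (N+1) m ℓ) {c' : Fin N → ℕ} (hc' : ∀ i, c' i < m) (π' : Equiv.Perm (Fin N)) :
    Door ℓ (Fin.snoc c' (m-1)) (extPerm π') 0 ↔ Full (resL ℓ m) c' π' := by
  unfold Door DoorF Full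
  rw [image_erase_zero']
  have himg : univ.image (fun j : Fin (N+1) => ℓ (vtx (Fin.snoc c' (m-1)) (extPerm π') j.succ))
      = (univ.image fun j : Fin (N+1) => resL ℓ m (vtx c' π' j)).image Fin.castSucc := by
    rw [Finset.image_image]
    refine Finset.image_congr fun j _ => ?_
    have hle : ∀ i, vtx c' π' j i ≤ m := vtx_le hc' π' j
    show ℓ (vtx (Fin.snoc c' (m-1)) (extPerm π') j.succ) = (resL ℓ m (vtx c' π' j)).castSucc
    rw [vtx_ext hm, resL_eq hBC hle]
  rw [himg]
  have hlast : univ.erase (Fin.last (N+1)) = (univ : Finset (Fin (N+1))).image Fin.castSucc := by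
    rw [← Finset.compl_singleton, ← Fin.image_castSucc]
  rw [hlast]
  constructor
  · intro h
    have himgeq := Finset.image_injective (Fin.castSucc_injective (N+1)) h
    intro y
    have hy : y ∈ (univ.image fun j : Fin (N+1) => resL ℓ m (vtx c' π' j)) := by
      rw [himgeq]; exact mem_univ y
    obtain ⟨j, _, hj⟩ := Finset.mem_image.mp hy
    exact ⟨j, hj⟩
  · intro h
    rw [Finset.image_univ_of_surjective h]

lemma mem_fulls {n m : ℕ} {ℓ : (Fin n → ℕ) → Fin (n+1)} {s : (Fin n → ℕ) × Equiv.Perm (Fin n)} :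
    s ∈ (simps n m).filter (fun s => Full ℓ s.1 s.2) ↔ (∀ i, s.1 i < m) ∧ Full ℓ s.1 s.2 := by
  simp [simps, mem_cells, Finset.mem_filter, Finset.mem_product]

lemma fixed_eq {N m : ℕ} (hm : 0 < m) {ℓ : (Fin (N+1) → ℕ) → Fin (N+2)} (hBC : BC (N+1) m ℓ) :
    (TT N m ℓ).filter (fun t => psi m t = t)
      = ((simps N m).filter fun s => Full (resL ℓ m) s.1 s.2).image
          (fun s : (Fin N → ℕ) × Equiv.Perm (Fin N) =>
            (((Fin.snoc s.1 (m-1) : Fin (N+1) → ℕ), extPerm s.2), (0 : Fin (N+2)))) := by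
  ext t
  rw [Finset.mem_filter, Finset.mem_image, mem_TT]
  constructor
  · rintro ⟨⟨hcell, hdoor⟩, hfix⟩
    obtain ⟨⟨c, π⟩, k⟩ := t
    simp only at hcell hdoor hfix
    by_cases h0 : k = 0
    · subst h0
      by_cases hcond : c (π 0) + 2 ≤ m
      · exfalso
        rw [psi_at_zero_pos c π hcond] at hfix
        have h := congrArg Prod.snd hfix
        simp only at h
        exact last_ne_zero' h
      · have hπ0 := fixed_zero_pi hBC hcell hdoor hcond
        have hclast : c (Fin.last N) + 1 = m := by
          rw [← hπ0]
          have := hcell (π 0)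
          omega
        have hsnoc : Fin.snoc (fun i : Fin N => c i.castSucc) (m-1) = c := by
          funext i
          cases i using Fin.lastCases with
          | last => rw [Fin.snoc_last]; omega
          | cast i => rw [Fin.snoc_castSucc]
        refine ⟨(fun i => c i.castSucc, restr π hπ0), mem_fulls.mpr ⟨fun i => hcell i.castSucc, ?_⟩, ?_⟩
        · refine (full_ext_iff hm hBC (fun i => hcell i.castSucc) (restr π hπ0)).mp ?_
          rw [hsnoc, extPerm_restr]
          exact hdoor
        · simp only
          rw [hsnoc, extPerm_restr]
    · exfalso
      by_cases hl : k = Fin.last (N+1)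
      · subst hl
        have hpos := fixed_not_last hBC hcell hdoor
        rw [psi_at_last_pos c π hpos] at hfix
        have h := congrArg Prod.snd hfix
        simp only at h
        exact last_ne_zero' h.symm
      · rw [psi_at_mid c π h0 hl] at hfix
        have h := congrArg (fun t => t.1.2) hfix
        simp only at h
        have hswap : Equiv.swap (k.pred h0) (k.castPred hl) = 1 :=
          mul_left_cancel (h.trans (mul_one π).symm)
        have h2 := congrArg (fun e : Equiv.Perm (Fin (N+1)) => e (k.pred h0)) hswap
        simp only [Equiv.swap_apply_left, Equiv.Perm.one_apply] at h2
        have h3 := congrArg Fin.val h2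
        rw [Fin.coe_castPred, Fin.coe_pred] at h3
        have : (k:ℕ) ≠ 0 := fun hc => h0 (Fin.ext hc)
        omega
  · rintro ⟨⟨c', π'⟩, hmem, henc⟩
    rw [mem_fulls] at hmem
    obtain ⟨hc', hfull⟩ := hmem
    subst henc
    simp only
    have hcell : ∀ i, (Fin.snoc c' (m-1) : Fin (N+1) → ℕ) i < m := by
      intro i
      cases i using Fin.lastCases with
      | last => rw [Fin.snoc_last]; omega
      | cast i => rw [Fin.snoc_castSucc]; exact hc' i
    refine ⟨⟨hcell, (full_ext_iff hm hBC hc' π').mpr hfull⟩, ?_⟩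
    apply psi_at_zero_neg
    rw [extPerm_zero, Fin.snoc_last]
    omega

lemma sum_modEq_sum {α : Type*} (s : Finset α) (f g : α → ℕ)
    (h : ∀ a ∈ s, f a ≡ g a [MOD 2]) : (∑ a ∈ s, f a) ≡ (∑ a ∈ s, g a) [MOD 2] := by
  classical
  induction s using Finset.induction_on with
  | empty => rfl
  | @insert a s ha ih =>
    rw [Finset.sum_insert ha, Finset.sum_insert ha]
    exact Nat.ModEq.add (h _ (Finset.mem_insert_self _ _))
      (ih fun b hb => h b (Finset.mem_insert_of_mem hb))

lemma TT_card_eq_sum {N m : ℕ} (ℓ : (Fin (N+1) → ℕ) → Fin (N+2)) :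
    (TT N m ℓ).card
      = ∑ s ∈ simps (N+1) m, (univ.filter fun k => Door ℓ s.1 s.2 k).card := by
  rw [TT, Finset.card_filter, Finset.sum_product]
  refine Finset.sum_congr rfl fun s _ => ?_
  rw [Finset.card_filter]

theorem fullCount_odd : ∀ (n m : ℕ), 0 < m → ∀ ℓ : (Fin n → ℕ) → Fin (n+1), BC n m ℓ →
    Odd (((simps n m).filter fun s => Full ℓ s.1 s.2).card) := by
  intro n
  induction n with
  | zero =>
    intro m hm ℓ _
    have hone : ∀ a b : Fin (0+1), a = b := by decide
    have hall : ∀ s ∈ simps 0 m, Full ℓ s.1 s.2 := by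
      intro s _ y
      exact ⟨0, hone _ y⟩
    rw [Finset.filter_true_of_mem hall, simps, Finset.card_product]
    have h1 : cells 0 m = {fun i : Fin 0 => i.elim0} := by
      apply Finset.eq_singleton_iff_unique_mem.mpr
      constructor
      · rw [mem_cells]; exact fun i => i.elim0
      · intro c _; funext i; exact i.elim0
    have h2 : (univ : Finset (Equiv.Perm (Fin 0))).card = 1 := by
      rw [Finset.card_univ]
      simp [Fintype.card_perm]
    rw [h1, h2, Finset.card_singleton]
    exact odd_one
  | succ N IH =>
    intro m hm ℓ hBC
    have hA : (TT N m ℓ).card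
        ≡ ((simps (N+1) m).filter fun s => Full ℓ s.1 s.2).card [MOD 2] := by
      rw [TT_card_eq_sum, Finset.card_filter]
      exact sum_modEq_sum _ _ _ (fun s _ => doorF_count (fun k => ℓ (vtx s.1 s.2 k)))
    have hB := card_modEq_card_fixed (TT N m ℓ) (psi m)
      (fun a ha => psi_mem ha) (fun a ha => psi_invol ha)
    have hencinj : Function.Injective
        (fun s : (Fin N → ℕ) × Equiv.Perm (Fin N) =>
          (((Fin.snoc s.1 (m-1) : Fin (N+1) → ℕ), extPerm s.2), (0 : Fin (N+2)))) := by
      intro a b hab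
      simp only [Prod.mk.injEq] at hab
      obtain ⟨⟨h1, h2⟩, -⟩ := hab
      refine Prod.ext ?_ (extPerm_inj h2)
      funext i
      have := congrFun h1 i.castSucc
      rwa [Fin.snoc_castSucc, Fin.snoc_castSucc] at this
    have hC := fixed_eq hm hBC
    have hD : ((TT N m ℓ).filter (fun t => psi m t = t)).card
        = ((simps N m).filter fun s => Full (resL ℓ m) s.1 s.2).card := by
      rw [hC, Finset.card_image_of_injective _ hencinj]
    have hIH := IH m hm (resL ℓ m) (BC_resL hBC)
    rw [Nat.odd_iff] at hIH ⊢
    unfold Nat.ModEq at hA hB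
    omega

-- ==== existence of a fully labeled simplex ====

lemma exists_full_simplex {n m : ℕ} (hm : 0 < m) (ℓ : (Fin n → ℕ) → Fin (n+1))
    (hBC : BC n m ℓ) :
    ∃ (c : Fin n → ℕ) (π : Equiv.Perm (Fin n)), (∀ i, c i < m) ∧
      Function.Surjective (fun k : Fin (n+1) => ℓ (vtx c π k)) := by
  have hodd := fullCount_odd n m hm ℓ hBC
  have hpos : 0 < ((simps n m).filter fun s => Full ℓ s.1 s.2).card := by
    rcases hodd with ⟨t, ht⟩
    omega
  obtain ⟨s, hs⟩ := Finset.card_pos.mp hpos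
  rw [Finset.mem_filter] at hs
  obtain ⟨hs1, hs2⟩ := hs
  rw [simps, Finset.mem_product, mem_cells] at hs1
  exact ⟨s.1, s.2, hs1.1, hs2⟩

-- ==== the labeling from F and the limit argument ====

section PM

variable {n : ℕ} (a b : Fin n → ℝ) (F : (Fin n → ℝ) → (Fin n → ℝ))

noncomputable def emb (m : ℕ) (p : Fin n → ℕ) : Fin n → ℝ :=
  fun i => a i + ((p i : ℝ) / (m : ℝ)) * (b i - a i)

noncomputable def lab (x : Fin n → ℝ) : Fin (n+1) :=
  ((Fin.find? (fun i => decide (0 < F x i))).map Fin.castSucc).getD (Fin.last n)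

lemma lab_last {x : Fin n → ℝ} (h : lab F x = Fin.last n) : ∀ i, F x i ≤ 0 := by
  intro i
  rcases hfind : Fin.find? (fun i => decide (0 < F x i)) with - | j
  · have : ¬ 0 < F x i := fun h' => by
      have := Fin.isSome_find?_of_eq_true (p := fun i => decide (0 < F x i)) (i := i) (by simpa using h')
      rw [hfind] at this; simp at this
    linarith [not_lt.mp this]
  · exfalso
    rw [lab, hfind] at h
    simp only [Option.map_some, Option.getD_some] at h
    exact (Fin.castSucc_lt_last j).ne h

lemma lab_castSucc {x : Fin n → ℝ} {i : Fin n} (h : lab F x = i.castSucc) : 0 < F x i := by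
  rcases hfind : Fin.find? (fun i => decide (0 < F x i)) with - | j
  · exfalso
    rw [lab, hfind] at h
    simp only [Option.map_none, Option.getD_none] at h
    exact (Fin.castSucc_lt_last i).ne h.symm
  · rw [lab, hfind] at h
    simp only [Option.map_some, Option.getD_some] at h
    have hj : j = i := Fin.castSucc_injective _ h
    subst hj
    simpa using (Fin.mem_find?_iff.mp hfind).1

lemma lab_le {x : Fin n → ℝ} {i : Fin n} (h : 0 < F x i) : lab F x ≤ i.castSucc := by
  rcases hfind : Fin.find? (fun i => decide (0 < F x i)) with - | j
  · exfalso
    have := Fin.isSome_find?_of_eq_true (p := fun i => decide (0 < F x i)) (i := i) (by simpa using h)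
    rw [hfind] at this; simp at this
  · rw [lab, hfind]
    simp only [Option.map_some, Option.getD_some]
    rw [Fin.castSucc_le_castSucc_iff]
    by_contra hc
    exact (by simpa using (Fin.mem_find?_iff.mp hfind).2 _ (not_le.mp hc) : ¬ 0 < F x i) h

lemma emb_mem_Icc (hab : ∀ i, a i < b i) {m : ℕ} (hm : 0 < m) {p : Fin n → ℕ}
    (hp : ∀ i, p i ≤ m) : emb a b m p ∈ Set.Icc a b := by
  constructor <;> intro i <;> unfold emb
  · have h1 : (0:ℝ) ≤ ((p i : ℝ) / (m : ℝ)) * (b i - a i) := by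
      apply mul_nonneg
      · positivity
      · linarith [hab i]
    linarith
  · have h1 : ((p i : ℝ) / (m : ℝ)) ≤ 1 := by
      rw [div_le_one (by positivity)]
      exact_mod_cast hp i
    have h2 : ((p i : ℝ) / (m : ℝ)) * (b i - a i) ≤ 1 * (b i - a i) := by
      apply mul_le_mul_of_nonneg_right h1
      linarith [hab i]
    simp only [Pi.le_def]
    linarith

lemma BC_lab (hab : ∀ i, a i < b i)
    (hFa : ∀ x ∈ Set.Icc a b, ∀ i, x i = a i → F x i < 0)
    (hFb : ∀ x ∈ Set.Icc a b, ∀ i, x i = b i → 0 < F x i)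
    {m : ℕ} (hm : 0 < m) :
    BC n m (fun p => lab F (emb a b m p)) := by
  intro p hp
  have hmem := emb_mem_Icc a b hab hm hp
  constructor
  · intro i hi hc
    have h0 : emb a b m p i = a i := by
      unfold emb
      rw [hi]
      simp
    have hneg := hFa _ hmem i h0
    have := lab_castSucc F hc
    linarith
  · intro i hi
    have h0 : emb a b m p i = b i := by
      unfold emb
      rw [hi, div_self (by exact_mod_cast hm.ne' : (m:ℝ) ≠ 0)]
      ring
    exact lab_le F (hFb _ hmem i h0)

end PM

open Filter Topology in
lemma pm_exists {n : ℕ} (a b : Fin n → ℝ) (hab : ∀ i, a i < b i)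
    (F : (Fin n → ℝ) → (Fin n → ℝ))
    (hF : ContinuousOn F (Set.Icc a b))
    (hFa : ∀ x ∈ Set.Icc a b, ∀ i, x i = a i → F x i < 0)
    (hFb : ∀ x ∈ Set.Icc a b, ∀ i, x i = b i → 0 < F x i) :
    ∃ x₀, (∀ i, x₀ i ∈ Set.Ioo (a i) (b i)) ∧ F x₀ = 0 := by
  have H : ∀ m : ℕ, ∃ (c : Fin n → ℕ) (π : Equiv.Perm (Fin n)), (∀ i, c i < m+1) ∧
      Function.Surjective (fun k : Fin (n+1) => lab F (emb a b (m+1) (vtx c π k))) :=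
    fun m => exists_full_simplex (Nat.succ_pos m) _ (BC_lab a b F hab hFa hFb (Nat.succ_pos m))
  choose c π hc hsurj using H
  have Hk : ∀ (m : ℕ) (t : Fin (n+1)),
      ∃ k, lab F (emb a b (m+1) (vtx (c m) (π m) k)) = t := fun m t => hsurj m t
  choose k hk using Hk
  set pt : ℕ → Fin (n+1) → (Fin n → ℝ) :=
    fun m j => emb a b (m+1) (vtx (c m) (π m) j) with hpt
  have hptIcc : ∀ m j, pt m j ∈ Set.Icc a b := fun m j =>
    emb_mem_Icc a b hab (Nat.succ_pos m) (vtx_le (hc m) (π m) j)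
  obtain ⟨x₀, hx₀, φ, hφ, hlim⟩ :=
    (isCompact_Icc (a := a) (b := b)).tendsto_subseq (x := fun m => pt m 0)
      (fun m => hptIcc m 0)
  -- uniform bound on vertex spread
  have hbound : ∀ (m : ℕ) (j : Fin (n+1)) (i : Fin n),
      |pt m j i - pt m 0 i| ≤ (b i - a i) * (1/((m:ℝ)+1)) := by
    intro m j i
    have hm1 : ((m:ℝ)+1) > 0 := by positivity
    have hba : 0 < b i - a i := by linarith [hab i]
    have hv0 : vtx (c m) (π m) 0 i = c m i := by
      unfold vtx
      rw [if_neg (by simp)]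
      omega
    have hvj : vtx (c m) (π m) j i = c m i
        + (if (((π m).symm i : ℕ) < (j : ℕ)) then 1 else 0) := rfl
    rw [hpt]
    unfold emb
    dsimp only
    rw [hv0, hvj]
    push_cast
    split_ifs with hcnd
    · rw [show (a i + ((c m i : ℝ) + 1) / ((m:ℝ)+1) * (b i - a i)
          - (a i + (c m i : ℝ) / ((m:ℝ)+1) * (b i - a i)))
        = (b i - a i) * (1/((m:ℝ)+1)) from by field_simp; ring]
      rw [abs_of_nonneg (by positivity)]
    · simp
      positivity
  -- convergence of any vertex selection
  have hdiff : ∀ (j : ℕ → Fin (n+1)),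
      Tendsto (fun s => pt (φ s) (j s)) atTop (𝓝 x₀) := by
    intro j
    rw [tendsto_pi_nhds]
    intro i
    have hx₀i : Tendsto (fun s => pt (φ s) 0 i) atTop (𝓝 (x₀ i)) :=
      tendsto_pi_nhds.mp hlim i
    have hzero : Tendsto (fun s => pt (φ s) (j s) i - pt (φ s) 0 i) atTop (𝓝 0) := by
      apply squeeze_zero_norm (fun s => hbound (φ s) (j s) i)
      have h1 : Tendsto (fun m : ℕ => 1/((m:ℝ)+1)) atTop (𝓝 0) :=
        tendsto_one_div_add_atTop_nhds_zero_nat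
      have h2 := (h1.comp hφ.tendsto_atTop).const_mul (b i - a i)
      simpa using h2
    have h3 := hx₀i.add hzero
    rw [add_zero] at h3
    have h4 : (fun s => pt (φ s) 0 i + (pt (φ s) (j s) i - pt (φ s) 0 i))
        = fun s => pt (φ s) (j s) i := funext fun s => by ring
    rwa [h4] at h3
  -- limits of F along vertex selections
  have hFlim : ∀ (t : Fin (n+1)) (i : Fin n),
      Tendsto (fun s => F (pt (φ s) (k (φ s) t)) i) atTop (𝓝 (F x₀ i)) := by
    intro t i
    have hcw : ContinuousWithinAt F (Set.Icc a b) x₀ := hF x₀ hx₀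
    have h1 : Tendsto (fun s => pt (φ s) (k (φ s) t)) atTop (𝓝[Set.Icc a b] x₀) := by
      rw [tendsto_nhdsWithin_iff]
      exact ⟨hdiff _, Filter.Eventually.of_forall fun s => hptIcc _ _⟩
    have h2 := hcw.tendsto.comp h1
    exact ((continuous_apply i).continuousAt.tendsto.comp h2)
  have hF0 : F x₀ = 0 := by
    funext i
    have hge : 0 ≤ F x₀ i := by
      refine ge_of_tendsto' (hFlim i.castSucc i) fun s => ?_
      exact le_of_lt (lab_castSucc F (hk (φ s) i.castSucc))
    have hle : F x₀ i ≤ 0 := by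
      refine le_of_tendsto' (hFlim (Fin.last n) i) fun s => ?_
      exact lab_last F (hk (φ s) (Fin.last n)) i
    simp only [Pi.zero_apply]
    linarith
  refine ⟨x₀, fun i => ?_, hF0⟩
  constructor
  · rcases lt_or_eq_of_le (hx₀.1 i) with h | h
    · exact h
    · exfalso
      have := hFa x₀ hx₀ i h.symm
      rw [hF0] at this
      simp at this
  · rcases lt_or_eq_of_le (hx₀.2 i) with h | h
    · exact h
    · exfalso
      have := hFb x₀ hx₀ i h
      rw [hF0] at this
      simp at this

-- ==== convexity part ====

section Convex

variable {n : ℕ} {a b : Fin n → ℝ} {F : (Fin n → ℝ) → (Fin n → ℝ)}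
  {E : (Fin n → ℝ) → ℝ}

lemma fderiv_eq_sum (hE : ContDiff ℝ 2 E)
    (hgrad : ∀ x i, fderiv ℝ E x (Pi.single i 1) = F x i) (x v : Fin n → ℝ) :
    fderiv ℝ E x v = ∑ i, v i * F x i := by
  have hv : v = ∑ i, v i • (Pi.single i (1:ℝ) : Fin n → ℝ) := by
    funext j
    rw [Finset.sum_apply]
    simp only [Pi.smul_apply, Pi.single_apply, smul_eq_mul]
    rw [Finset.sum_congr rfl (fun i _ => by rw [mul_ite, mul_one, mul_zero])]
    rw [Finset.sum_ite_eq univ j v]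
    simp
  conv_lhs => rw [hv]
  rw [map_sum]
  refine Finset.sum_congr rfl fun i _ => ?_
  rw [(fderiv ℝ E x).map_smul, hgrad, smul_eq_mul]

lemma hasDerivAt_line (x d : Fin n → ℝ) (t : ℝ) :
    HasDerivAt (fun t : ℝ => x + t • d) d t := by
  have h1 : HasDerivAt (fun t : ℝ => t • d) d t := by
    simpa using (hasDerivAt_id t).smul_const d
  exact h1.const_add x

lemma seg_mem_Icc (hx : x₀ ∈ Set.Icc a b) (hy : y ∈ Set.Icc a b) {t : ℝ}
    (ht : t ∈ Set.Icc (0:ℝ) 1) : x₀ + t • (y - x₀) ∈ Set.Icc a b :=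
  (convex_Icc a b).add_smul_sub_mem hx hy ht

lemma grad_line_strictMono (hE : ContDiff ℝ 2 E)
    (hHess : ∀ x ∈ Set.Icc a b, ∀ v : Fin n → ℝ, v ≠ 0 →
      0 < fderiv ℝ (fun y => fderiv ℝ E y v) x v)
    {x₀ y : Fin n → ℝ} (hx : x₀ ∈ Set.Icc a b) (hy : y ∈ Set.Icc a b)
    (hne : y ≠ x₀) :
    StrictMonoOn (fun t : ℝ => fderiv ℝ E (x₀ + t • (y - x₀)) (y - x₀))
      (Set.Icc (0:ℝ) 1) := by
  set d := y - x₀ with hd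
  have hdne : d ≠ 0 := sub_ne_zero.mpr hne
  have hG : ContDiff ℝ 1 (fun z => fderiv ℝ E z d) :=
    (hE.fderiv_right (by norm_num)).clm_apply contDiff_const
  apply strictMonoOn_of_deriv_pos (convex_Icc 0 1)
  · apply Continuous.continuousOn
    exact hG.continuous.comp (by continuity)
  · intro t ht
    rw [interior_Icc] at ht
    have hmem : x₀ + t • d ∈ Set.Icc a b := seg_mem_Icc hx hy (Set.mem_Icc_of_Ioo ht)
    have hda := ((hG.differentiable one_ne_zero) (x₀ + t • d)).hasFDerivAt.comp_hasDerivAt t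
      (hasDerivAt_line x₀ d t)
    have hda' : HasDerivAt (fun t : ℝ => fderiv ℝ E (x₀ + t • d) d)
        (fderiv ℝ (fun z => fderiv ℝ E z d) (x₀ + t • d) d) t := hda
    rw [hda'.deriv]
    exact hHess _ hmem d hdne

lemma energy_lt (hE : ContDiff ℝ 2 E)
    (hHess : ∀ x ∈ Set.Icc a b, ∀ v : Fin n → ℝ, v ≠ 0 →
      0 < fderiv ℝ (fun y => fderiv ℝ E y v) x v)
    {x₀ y : Fin n → ℝ} (hx : x₀ ∈ Set.Icc a b) (hy : y ∈ Set.Icc a b)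
    (hne : y ≠ x₀) (h0 : fderiv ℝ E x₀ (y - x₀) = 0) :
    E x₀ < E y := by
  set d := y - x₀ with hd
  have hEdiff : Differentiable ℝ E := hE.differentiable (by norm_num)
  have hgd : ∀ t : ℝ, HasDerivAt (fun s : ℝ => E (x₀ + s • d))
      (fderiv ℝ E (x₀ + t • d) d) t := fun t =>
    (hEdiff (x₀ + t • d)).hasFDerivAt.comp_hasDerivAt t (hasDerivAt_line x₀ d t)
  obtain ⟨ξ, hξ, heq⟩ := exists_hasDerivAt_eq_slope (fun s : ℝ => E (x₀ + s • d))
    (fun t => fderiv ℝ E (x₀ + t • d) d) one_pos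
    (Continuous.continuousOn (by
      exact hEdiff.continuous.comp (by continuity)))
    (fun t _ => hgd t)
  have hmono := grad_line_strictMono hE hHess hx hy hne
  have hlt : fderiv ℝ E (x₀ + (0:ℝ) • d) d < fderiv ℝ E (x₀ + ξ • d) d :=
    hmono (Set.left_mem_Icc.mpr zero_le_one) (Set.mem_Icc_of_Ioo hξ) hξ.1
  rw [zero_smul, add_zero, h0] at hlt
  have h1 : x₀ + (1:ℝ) • d = y := by rw [one_smul, hd]; abel
  have h0' : x₀ + (0:ℝ) • d = x₀ := by rw [zero_smul, add_zero]
  rw [h1, h0'] at heq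
  rw [heq] at hlt
  have : (0:ℝ) < E y - E x₀ := by
    have hlt' := hlt
    rw [sub_zero, div_one] at hlt'
    linarith
  linarith

lemma pm_unique_zero (hE : ContDiff ℝ 2 E)
    (hgrad : ∀ x i, fderiv ℝ E x (Pi.single i 1) = F x i)
    (hHess : ∀ x ∈ Set.Icc a b, ∀ v : Fin n → ℝ, v ≠ 0 →
      0 < fderiv ℝ (fun y => fderiv ℝ E y v) x v)
    {x₀ y : Fin n → ℝ} (hx : x₀ ∈ Set.Icc a b) (hF0 : F x₀ = 0)
    (hy : y ∈ Set.Icc a b) (hFy : F y = 0) : y = x₀ := by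
  by_contra hne
  set d := y - x₀ with hd
  have hmono := grad_line_strictMono hE hHess hx hy hne
  have hlt : fderiv ℝ E (x₀ + (0:ℝ) • d) d < fderiv ℝ E (x₀ + (1:ℝ) • d) d :=
    hmono (Set.left_mem_Icc.mpr zero_le_one) (Set.right_mem_Icc.mpr zero_le_one) one_pos
  have h1 : x₀ + (1:ℝ) • d = y := by rw [one_smul, hd]; abel
  have h0' : x₀ + (0:ℝ) • d = x₀ := by rw [zero_smul, add_zero]
  rw [h1, h0'] at hlt
  rw [fderiv_eq_sum hE hgrad, fderiv_eq_sum hE hgrad, hF0, hFy] at hlt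
  simp at hlt

end Convex

open Topology in
/-- Poincaré–Miranda plus convexity: if `F` is continuous on the
box `R = Πᵢ [aᵢ, bᵢ]` with `Fᵢ < 0` on the face `xᵢ = aᵢ` and `Fᵢ > 0` on the
face `xᵢ = bᵢ`, then `F` has a zero `x₀` in the interior of `R`; moreover, if
`F = ∇E` for a `C²` function `E` whose Hessian is positive definite throughout
`R`, then `x₀` is a local minimum of `E` and the unique zero of `F` in `R`. -/
theorem stmt13 (n : ℕ) (a b : Fin n → ℝ) (hab : ∀ i, a i < b i)
    (F : (Fin n → ℝ) → (Fin n → ℝ))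
    (hF : ContinuousOn F (Set.Icc a b))
    (hFa : ∀ x ∈ Set.Icc a b, ∀ i, x i = a i → F x i < 0)
    (hFb : ∀ x ∈ Set.Icc a b, ∀ i, x i = b i → 0 < F x i) :
    (∃ x₀, (∀ i, x₀ i ∈ Set.Ioo (a i) (b i)) ∧ F x₀ = 0) ∧
    (∀ E : (Fin n → ℝ) → ℝ, ContDiff ℝ 2 E →
      (∀ x i, fderiv ℝ E x (Pi.single i 1) = F x i) →
      (∀ x ∈ Set.Icc a b, ∀ v : Fin n → ℝ, v ≠ 0 →
        0 < fderiv ℝ (fun y => fderiv ℝ E y v) x v) →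
      ∃ x₀, (∀ i, x₀ i ∈ Set.Ioo (a i) (b i)) ∧ F x₀ = 0 ∧
        IsLocalMin E x₀ ∧ ∀ y ∈ Set.Icc a b, F y = 0 → y = x₀) := by
  obtain ⟨x₀, hioo, hF0⟩ := pm_exists a b hab F hF hFa hFb
  have hx₀ : x₀ ∈ Set.Icc a b := ⟨fun i => (hioo i).1.le, fun i => (hioo i).2.le⟩
  refine ⟨⟨x₀, hioo, hF0⟩, ?_⟩
  intro E hE hgrad hHess
  have hIccnhds : Set.Icc a b ∈ 𝓝 x₀ := by
    have hU : IsOpen (Set.pi Set.univ fun i => Set.Ioo (a i) (b i)) :=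
      isOpen_set_pi Set.finite_univ (fun i _ => isOpen_Ioo)
    apply Filter.mem_of_superset (hU.mem_nhds ?_)
    · intro y hy
      rw [Set.mem_pi] at hy
      exact ⟨fun i => (hy i trivial).1.le, fun i => (hy i trivial).2.le⟩
    · rw [Set.mem_pi]
      exact fun i _ => hioo i
  have hmin : IsLocalMin E x₀ := by
    rw [IsLocalMin, IsMinFilter]
    filter_upwards [hIccnhds] with y hy
    rcases eq_or_ne y x₀ with rfl | hne
    · exact le_refl _
    · refine (energy_lt hE hHess hx₀ hy hne ?_).le
      rw [fderiv_eq_sum hE hgrad, hF0]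
      simp
  exact ⟨x₀, hioo, hF0, hmin,
    fun y hy hFy => pm_unique_zero hE hgrad hHess hx₀ hF0 hy hFy⟩
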